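/- Let X and Y be real Hilbert spaces, A : X → Y a bounded linear operator, (X_j)_{j∈ℕ} a sequence of closed subspaces of X with X_j ⊆ X_{j+1} for all j, and g ∈ Y such that there exists x' ∈ X₀ with A x' = g. For each j let M_j := {f ∈ X_j : A f = g} (a nonempty closed affine subset of X, and M_j ⊆ M_{j+1}), and let V denote the closure of ∪_{j∈ℕ} M_j (a closed affine subset of X). If (x_j)_{j∈ℕ} is a sequence in X converging to x ∈ X, then the metric projections satisfy P_{M_j} x_j → P_V x as j → ∞. -/

import Mathlib

open Filter

/-- Let `A : X →L[ℝ] Y` be bounded linear between real Hilbert spaces,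
`(Xs j)` a nested sequence of closed subspaces, and `g ∈ Y` with a solution `x' ∈ Xs 0`.
Let `M j := {f ∈ Xs j : A f = g}` and `V` the closure of `⋃ j, M j`. If `x j → x`, then
the metric projections `p j` of `x j` onto `M j` converge to the metric projection `q` of
`x` onto `V`. -/
theorem projections_onto_nested_solution_sets_converge
    {X Y : Type*} [NormedAddCommGroup X] [InnerProductSpace ℝ X] [CompleteSpace X]
    [NormedAddCommGroup Y] [InnerProductSpace ℝ Y] [CompleteSpace Y]
    (A : X →L[ℝ] Y)
    (Xs : ℕ → Submodule ℝ X) (hmono : ∀ j, Xs j ≤ Xs (j + 1))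
    (hclosed : ∀ j, IsClosed (Xs j : Set X))
    (g : Y) (x' : X) (hx'mem : x' ∈ Xs 0) (hx'sol : A x' = g)
    (M : ℕ → Set X) (hM : ∀ j, M j = {f : X | f ∈ Xs j ∧ A f = g})
    (V : Set X) (hV : V = closure (⋃ j, M j))
    (x : ℕ → X) (xlim : X) (hx : Tendsto x atTop (nhds xlim))
    (p : ℕ → X) (hp : ∀ j, p j ∈ M j)
    (hpproj : ∀ j, ∀ z ∈ M j, ‖x j - p j‖ ≤ ‖x j - z‖)
    (q : X) (hq : q ∈ V) (hqproj : ∀ z ∈ V, ‖xlim - q‖ ≤ ‖xlim - z‖) :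
    Tendsto p atTop (nhds q) := by
  -- monotonicity of Xs and M
  have hXsmono : Monotone Xs := monotone_nat_of_le_succ hmono
  have hMmono : ∀ {j k : ℕ}, j ≤ k → M j ⊆ M k := by
    intro j k hjk f hf
    rw [hM] at hf ⊢
    exact ⟨hXsmono hjk hf.1, hf.2⟩
  -- convexity of M j
  have hMconv : ∀ j, Convex ℝ (M j) := by
    intro j a ha b hb s t hs ht hst
    rw [hM] at ha hb ⊢
    refine ⟨(Xs j).add_mem ((Xs j).smul_mem s ha.1) ((Xs j).smul_mem t hb.1), ?_⟩
    simp only [map_add, map_smul, ha.2, hb.2]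
    rw [← add_smul, hst, one_smul]
  -- convexity of the union and of V
  have hUconv : Convex ℝ (⋃ j, M j) := by
    intro a ha b hb s t hs ht hst
    obtain ⟨j, haj⟩ := Set.mem_iUnion.1 ha
    obtain ⟨k, hbk⟩ := Set.mem_iUnion.1 hb
    exact Set.mem_iUnion.2 ⟨max j k,
      hMconv (max j k) (hMmono (le_max_left j k) haj) (hMmono (le_max_right j k) hbk) hs ht hst⟩
  have hVconv : Convex ℝ V := hV ▸ hUconv.closure
  -- p j ∈ V
  have hpV : ∀ j, p j ∈ V := fun j =>
    hV ▸ subset_closure (Set.mem_iUnion.2 ⟨j, hp j⟩)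
  -- variational inequality for q
  haveI : Nonempty V := ⟨⟨q, hq⟩⟩
  have hiInf : ‖xlim - q‖ = ⨅ w : V, ‖xlim - w‖ := by
    apply le_antisymm
    · exact le_ciInf fun w => hqproj w w.2
    · have hbdd : BddBelow (Set.range fun w : V => ‖xlim - (w : X)‖) := by
        refine ⟨0, ?_⟩
        rintro r ⟨w, rfl⟩
        exact norm_nonneg _
      exact ciInf_le hbdd ⟨q, hq⟩
  have hinner : ∀ z ∈ V, (inner ℝ (xlim - q) (z - q) : ℝ) ≤ 0 :=
    (norm_eq_iInf_iff_real_inner_le_zero hVconv hq).1 hiInf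
  set d := ‖xlim - q‖ with hd
  -- key pointwise inequality
  have key : ∀ j, ‖p j - q‖ ^ 2 ≤ ‖xlim - p j‖ ^ 2 - d ^ 2 := by
    intro j
    have hexp : ‖(p j - q) - (xlim - q)‖ ^ 2
        = ‖p j - q‖ ^ 2 - 2 * (inner ℝ (p j - q) (xlim - q) : ℝ) + ‖xlim - q‖ ^ 2 :=
      norm_sub_sq_real _ _
    have heq : (p j - q) - (xlim - q) = p j - xlim := by abel
    rw [heq] at hexp
    have hip : (inner ℝ (xlim - q) (p j - q) : ℝ) ≤ 0 := hinner _ (hpV j)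
    rw [real_inner_comm] at hip
    have hn : ‖p j - xlim‖ = ‖xlim - p j‖ := norm_sub_rev _ _
    rw [hn] at hexp
    nlinarith [hexp, hip]
  -- lower bound
  have hlow : ∀ j, d ≤ ‖xlim - p j‖ := fun j => hqproj _ (hpV j)
  -- upper bound, eventually
  have hupper : ∀ ε > (0 : ℝ), ∀ᶠ j in atTop, ‖xlim - p j‖ < d + ε := by
    intro ε hε
    have hq' : q ∈ closure (⋃ j, M j) := hV ▸ hq
    obtain ⟨z, hzU, hzq⟩ := Metric.mem_closure_iff.1 hq' (ε / 3) (by linarith)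
    obtain ⟨k, hzk⟩ := Set.mem_iUnion.1 hzU
    have hxd : ∀ᶠ j in atTop, dist (x j) xlim < ε / 3 :=
      hx (Metric.ball_mem_nhds xlim (by linarith))
    filter_upwards [hxd, eventually_ge_atTop k] with j hj hjk
    have hz : z ∈ M j := hMmono hjk hzk
    have h1 : ‖x j - p j‖ ≤ ‖x j - z‖ := hpproj j z hz
    have h2 : ‖x j - z‖ ≤ ‖x j - xlim‖ + ‖xlim - q‖ + ‖q - z‖ := by
      calc ‖x j - z‖ = ‖(x j - xlim) + (xlim - q) + (q - z)‖ := by abel_nf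
        _ ≤ ‖(x j - xlim) + (xlim - q)‖ + ‖q - z‖ := norm_add_le _ _
        _ ≤ ‖x j - xlim‖ + ‖xlim - q‖ + ‖q - z‖ := by
            exact add_le_add_left (norm_add_le _ _) _
    have h3 : ‖xlim - p j‖ ≤ ‖xlim - x j‖ + ‖x j - p j‖ := by
      calc ‖xlim - p j‖ = ‖(xlim - x j) + (x j - p j)‖ := by abel_nf
        _ ≤ _ := norm_add_le _ _
    have hxj : ‖x j - xlim‖ < ε / 3 := by rwa [dist_eq_norm] at hj
    have hxj' : ‖xlim - x j‖ < ε / 3 := by rwa [norm_sub_rev] at hxj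
    have hqz : ‖q - z‖ < ε / 3 := by rwa [dist_eq_norm] at hzq
    linarith
  -- ‖xlim - p j‖ → d
  have htend : Tendsto (fun j => ‖xlim - p j‖) atTop (nhds d) := by
    rw [Metric.tendsto_atTop]
    intro ε hε
    obtain ⟨N, hN⟩ := eventually_atTop.1 (hupper ε hε)
    refine ⟨N, fun j hj => ?_⟩
    rw [Real.dist_eq, abs_lt]
    constructor
    · linarith [hlow j]
    · linarith [hN j hj]
  -- squeeze
  have h0 : Tendsto (fun j => ‖xlim - p j‖ ^ 2 - d ^ 2) atTop (nhds 0) := by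
    have := (htend.pow 2).sub (tendsto_const_nhds (x := d ^ 2))
    simpa using this
  have hsq : Tendsto (fun j => ‖p j - q‖ ^ 2) atTop (nhds 0) :=
    squeeze_zero (fun j => sq_nonneg _) key h0
  have hnorm : Tendsto (fun j => ‖p j - q‖) atTop (nhds 0) := by
    have := hsq.sqrt
    simpa [Real.sqrt_sq (norm_nonneg _)] using this
  exact tendsto_iff_norm_sub_tendsto_zero.2 hnorm
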